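/- The merge operator on control-language expressions is associative: for all E1, E2, E3, (E1 ⊔ E2) ⊔ E3 = E1 ⊔ (E2 ⊔ E3), where equality includes both being undefined. -/

import Mathlib

/-- Expressions of the natural-number local language. -/
inductive Expr : Type
  | var (n : ℕ)
  | zero
  | succ (e : Expr)
  | tt
  | ff
deriving DecidableEq

/-- Capture-free substitution `e[x := e']` (there are no binders). -/
def subst : Expr → ℕ → Expr → Expr
  | .var m, x, e => if m = x then e else .var m
  | .zero, _, _ => .zero
  | .succ e', x, e => .succ (subst e' x e)
  | .tt, _, _ => .tt
  | .ff, _, _ => .ff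

/-- Free variables of an expression. -/
def FV : Expr → Finset ℕ
  | .var n => {n}
  | .zero => ∅
  | .succ e => FV e
  | .tt => ∅
  | .ff => ∅

/-- Synchronization labels. -/
inductive Choice : Type
  | L
  | R
deriving DecidableEq

/-- Control-language expressions. Locations and variables are natural numbers. -/
inductive Ctrl : Type
  | var (X : ℕ)
  | funLocal (F x : ℕ) (E : Ctrl)
  | funGlobal (F X : ℕ) (E : Ctrl)
  | appLocal (E : Ctrl) (e : Expr)
  | appGlobal (E1 E2 : Ctrl)
  | unit
  | ret (e : Expr)
  | letRet (x : ℕ) (E1 E2 : Ctrl)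
  | send (e : Expr) (ℓ : ℕ) (E : Ctrl)
  | recv (x : ℕ) (ℓ : ℕ) (E : Ctrl)
  | ite (e : Expr) (E1 E2 : Ctrl)
  | choose (d : Choice) (ℓ : ℕ) (E : Ctrl)
  | allowL (ℓ : ℕ) (E : Ctrl)
  | allowR (ℓ : ℕ) (E : Ctrl)
  | allowLR (ℓ : ℕ) (E1 E2 : Ctrl)
deriving DecidableEq

/-- The partial merge operator on control expressions. -/
def merge : Ctrl → Ctrl → Option Ctrl
  | .var X, .var Y => if X = Y then some (.var X) else none
  | .unit, .unit => some .unit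
  | .ret e, .ret e' => if e = e' then some (.ret e) else none
  | .funLocal F x E, .funLocal F' x' E' =>
      if F = F' ∧ x = x' ∧ E = E' then some (.funLocal F x E) else none
  | .funGlobal F X E, .funGlobal F' X' E' =>
      if F = F' ∧ X = X' ∧ E = E' then some (.funGlobal F X E) else none
  | .appLocal E a, .appLocal E' a' =>
      if a = a' then (merge E E').map (fun M => .appLocal M a) else none
  | .appGlobal E1 E2, .appGlobal E1' E2' => do
      let A ← merge E1 E1'; let B ← merge E2 E2'; pure (.appGlobal A B)
  | .letRet x E1 E2, .letRet x' E1' E2' =>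
      if x = x' then do
        let A ← merge E1 E1'; let B ← merge E2 E2'; pure (.letRet x A B)
      else none
  | .send e ℓ E, .send e' ℓ' E' =>
      if e = e' ∧ ℓ = ℓ' then (merge E E').map (fun M => .send e ℓ M) else none
  | .recv x ℓ E, .recv x' ℓ' E' =>
      if x = x' ∧ ℓ = ℓ' then (merge E E').map (fun M => .recv x ℓ M) else none
  | .ite e E1 E2, .ite e' E1' E2' =>
      if e = e' then do
        let A ← merge E1 E1'; let B ← merge E2 E2'; pure (.ite e A B)
      else none
  | .choose d ℓ E, .choose d' ℓ' E' =>
      if d = d' ∧ ℓ = ℓ' then (merge E E').map (fun M => .choose d ℓ M) else none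
  | .allowL ℓ E, .allowL ℓ' E' =>
      if ℓ = ℓ' then (merge E E').map (fun M => .allowL ℓ M) else none
  | .allowL ℓ E, .allowR ℓ' E' =>
      if ℓ = ℓ' then some (.allowLR ℓ E E') else none
  | .allowL ℓ E, .allowLR ℓ' E1' E2' =>
      if ℓ = ℓ' then (merge E E1').map (fun M => .allowLR ℓ M E2') else none
  | .allowR ℓ E, .allowL ℓ' E' =>
      if ℓ = ℓ' then some (.allowLR ℓ E' E) else none
  | .allowR ℓ E, .allowR ℓ' E' =>
      if ℓ = ℓ' then (merge E E').map (fun M => .allowR ℓ M) else none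
  | .allowR ℓ E, .allowLR ℓ' E1' E2' =>
      if ℓ = ℓ' then (merge E E2').map (fun M => .allowLR ℓ E1' M) else none
  | .allowLR ℓ E1 E2, .allowL ℓ' E' =>
      if ℓ = ℓ' then (merge E1 E').map (fun M => .allowLR ℓ M E2) else none
  | .allowLR ℓ E1 E2, .allowR ℓ' E' =>
      if ℓ = ℓ' then (merge E2 E').map (fun M => .allowLR ℓ E1 M) else none
  | .allowLR ℓ E1 E2, .allowLR ℓ' E1' E2' =>
      if ℓ = ℓ' then do
        let A ← merge E1 E1'; let B ← merge E2 E2'; pure (.allowLR ℓ A B)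
      else none
  | _, _ => none

/-- Substitution of a local expression `e` for the local variable `x`
    throughout a control expression (respecting local-variable binders). -/
def substCtrl : Ctrl → ℕ → Expr → Ctrl
  | .var X, _, _ => .var X
  | .funLocal F y E, x, e => .funLocal F y (if y = x then E else substCtrl E x e)
  | .funGlobal F X E, x, e => .funGlobal F X (substCtrl E x e)
  | .appLocal E a, x, e => .appLocal (substCtrl E x e) (subst a x e)
  | .appGlobal E1 E2, x, e => .appGlobal (substCtrl E1 x e) (substCtrl E2 x e)
  | .unit, _, _ => .unit
  | .ret a, x, e => .ret (subst a x e)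
  | .letRet y E1 E2, x, e =>
      .letRet y (substCtrl E1 x e) (if y = x then E2 else substCtrl E2 x e)
  | .send a ℓ E, x, e => .send (subst a x e) ℓ (substCtrl E x e)
  | .recv y ℓ E, x, e => .recv y ℓ (if y = x then E else substCtrl E x e)
  | .ite a E1 E2, x, e => .ite (subst a x e) (substCtrl E1 x e) (substCtrl E2 x e)
  | .choose d ℓ E, x, e => .choose d ℓ (substCtrl E x e)
  | .allowL ℓ E, x, e => .allowL ℓ (substCtrl E x e)
  | .allowR ℓ E, x, e => .allowR ℓ (substCtrl E x e)
  | .allowLR ℓ E1 E2, x, e => .allowLR ℓ (substCtrl E1 x e) (substCtrl E2 x e)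

/-- Substitution of a control expression for a control variable. -/
def substV : Ctrl → ℕ → Ctrl → Ctrl
  | .var Y, X, V => if Y = X then V else .var Y
  | .funLocal F y E, X, V => .funLocal F y (if F = X then E else substV E X V)
  | .funGlobal F Y E, X, V =>
      .funGlobal F Y (if F = X ∨ Y = X then E else substV E X V)
  | .appLocal E a, X, V => .appLocal (substV E X V) a
  | .appGlobal E1 E2, X, V => .appGlobal (substV E1 X V) (substV E2 X V)
  | .unit, _, _ => .unit
  | .ret a, _, _ => .ret a
  | .letRet y E1 E2, X, V => .letRet y (substV E1 X V) (substV E2 X V)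
  | .send a ℓ E, X, V => .send a ℓ (substV E X V)
  | .recv y ℓ E, X, V => .recv y ℓ (substV E X V)
  | .ite a E1 E2, X, V => .ite a (substV E1 X V) (substV E2 X V)
  | .choose d ℓ E, X, V => .choose d ℓ (substV E X V)
  | .allowL ℓ E, X, V => .allowL ℓ (substV E X V)
  | .allowR ℓ E, X, V => .allowR ℓ (substV E X V)
  | .allowLR ℓ E1 E2, X, V => .allowLR ℓ (substV E1 X V) (substV E2 X V)

/-- The less-nondeterminism relation `⊑` on control expressions. -/
inductive LND : Ctrl → Ctrl → Prop
  | var {X} : LND (.var X) (.var X)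
  | unit : LND .unit .unit
  | ret {e} : LND (.ret e) (.ret e)
  | funLocal {F x E} : LND (.funLocal F x E) (.funLocal F x E)
  | funGlobal {F X E} : LND (.funGlobal F X E) (.funGlobal F X E)
  | appLocal {E1 E2 e} : LND E1 E2 → LND (.appLocal E1 e) (.appLocal E2 e)
  | appGlobal {E11 E12 E21 E22} :
      LND E11 E21 → LND E12 E22 → LND (.appGlobal E11 E12) (.appGlobal E21 E22)
  | letRet {x E11 E12 E21 E22} :
      LND E11 E21 → LND E12 E22 → LND (.letRet x E11 E12) (.letRet x E21 E22)
  | send {e ℓ E1 E2} : LND E1 E2 → LND (.send e ℓ E1) (.send e ℓ E2)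
  | recv {x ℓ E1 E2} : LND E1 E2 → LND (.recv x ℓ E1) (.recv x ℓ E2)
  | ite {e E11 E12 E21 E22} :
      LND E11 E21 → LND E12 E22 → LND (.ite e E11 E12) (.ite e E21 E22)
  | choose {d ℓ E1 E2} : LND E1 E2 → LND (.choose d ℓ E1) (.choose d ℓ E2)
  | allowL {ℓ E1 E2} : LND E1 E2 → LND (.allowL ℓ E1) (.allowL ℓ E2)
  | allowR {ℓ E1 E2} : LND E1 E2 → LND (.allowR ℓ E1) (.allowR ℓ E2)
  | allowLR {ℓ E11 E12 E21 E22} :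
      LND E11 E21 → LND E12 E22 → LND (.allowLR ℓ E11 E12) (.allowLR ℓ E21 E22)
  | allowL_LR {ℓ E1 E21 E22} : LND E1 E21 → LND (.allowL ℓ E1) (.allowLR ℓ E21 E22)
  | allowR_LR {ℓ E1 E21 E22} : LND E1 E22 → LND (.allowR ℓ E1) (.allowLR ℓ E21 E22)

/-- Control-language values, relative to a notion `eval` of local values. -/
inductive CtrlVal (eval : Expr → Prop) : Ctrl → Prop
  | unit : CtrlVal eval .unit
  | ret {v} : eval v → CtrlVal eval (.ret v)
  | funLocal {F x E} : CtrlVal eval (.funLocal F x E)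
  | funGlobal {F X E} : CtrlVal eval (.funGlobal F X E)

/-- Labels for the control-language labeled transition system. -/
inductive Label : Type
  | tau
  | sendl (v : Expr) (ℓ : ℕ)
  | recvl (ℓ : ℕ) (v : Expr)
  | choosel (d : Choice) (ℓ : ℕ)
  | allow (ℓ : ℕ) (d : Choice)
  | syncTau
  | fn (l : Label)
  | arg (l : Label)

/-- The labeled operational semantics of control expressions, generic over
    the step relation `estep` and value predicate `eval` of the local language. -/
inductive CStep (estep : Expr → Expr → Prop) (eval : Expr → Prop) :
    Label → Ctrl → Ctrl → Prop
  | retE {e1 e2} : estep e1 e2 → CStep estep eval .tau (.ret e1) (.ret e2)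
  | ifE {e1 e2 E1 E2} :
      estep e1 e2 → CStep estep eval .tau (.ite e1 E1 E2) (.ite e2 E1 E2)
  | ifTrue {E1 E2} : CStep estep eval .tau (.ite .tt E1 E2) E1
  | ifFalse {E1 E2} : CStep estep eval .tau (.ite .ff E1 E2) E2
  | sendE {e1 e2 ℓ E} :
      estep e1 e2 → CStep estep eval .tau (.send e1 ℓ E) (.send e2 ℓ E)
  | sendV {v ℓ E} : eval v → CStep estep eval (.sendl v ℓ) (.send v ℓ E) E
  | recvV {v x ℓ E} :
      eval v → CStep estep eval (.recvl ℓ v) (.recv x ℓ E) (substCtrl E x v)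
  | choose {d ℓ E} : CStep estep eval (.choosel d ℓ) (.choose d ℓ E) E
  | allowLRL {ℓ E1 E2} : CStep estep eval (.allow ℓ .L) (.allowLR ℓ E1 E2) E1
  | allowLRR {ℓ E1 E2} : CStep estep eval (.allow ℓ .R) (.allowLR ℓ E1 E2) E2
  | allowLOnly {ℓ E} : CStep estep eval (.allow ℓ .L) (.allowL ℓ E) E
  | allowROnly {ℓ E} : CStep estep eval (.allow ℓ .R) (.allowR ℓ E) E
  | letRetArg {l x E1 E1' E2} :
      CStep estep eval l E1 E1' →
      CStep estep eval (.arg l) (.letRet x E1 E2) (.letRet x E1' E2)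
  | letRetV {v x E2} :
      eval v → CStep estep eval .syncTau (.letRet x (.ret v) E2) (substCtrl E2 x v)
  | appLocalFun {l F1 F2 e} :
      CStep estep eval l F1 F2 →
      CStep estep eval (.fn l) (.appLocal F1 e) (.appLocal F2 e)
  | appLocalArg {F e1 e2} :
      estep e1 e2 → CStep estep eval .tau (.appLocal F e1) (.appLocal F e2)
  | appLocalV {F x E v} :
      eval v →
      CStep estep eval .syncTau (.appLocal (.funLocal F x E) v) (substCtrl E x v)
  | appGlobalFun {l F1 F2 A} :
      CStep estep eval l F1 F2 →
      CStep estep eval (.fn l) (.appGlobal F1 A) (.appGlobal F2 A)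
  | appGlobalArg {l F A1 A2} :
      CStep estep eval l A1 A2 →
      CStep estep eval (.arg l) (.appGlobal F A1) (.appGlobal F A2)
  | appGlobalV {F X E V} :
      CtrlVal eval V →
      CStep estep eval .syncTau (.appGlobal (.funGlobal F X E) V) (substV E X V)


namespace MergeAssoc
set_option linter.dupNamespace false
set_option linter.dupNamespace false
@[simp] lemma m_var (X Y) : merge (.var X) (.var Y) = if X = Y then some (.var X) else none := rfl
@[simp] lemma m_unit : merge .unit .unit = some .unit := rfl
@[simp] lemma m_ret (e e') : merge (.ret e) (.ret e') = if e = e' then some (.ret e) else none := rfl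
@[simp] lemma m_funLocal (F x E F' x' E') : merge (.funLocal F x E) (.funLocal F' x' E') = if F = F' ∧ x = x' ∧ E = E' then some (.funLocal F x E) else none := rfl
@[simp] lemma m_funGlobal (F X E F' X' E') : merge (.funGlobal F X E) (.funGlobal F' X' E') = if F = F' ∧ X = X' ∧ E = E' then some (.funGlobal F X E) else none := rfl
@[simp] lemma m_appLocal (E a E' a') : merge (.appLocal E a) (.appLocal E' a') = if a = a' then (merge E E').map (fun M => .appLocal M a) else none := rfl
@[simp] lemma m_appGlobal (E1 E2 E1' E2') : merge (.appGlobal E1 E2) (.appGlobal E1' E2') = (merge E1 E1').bind (fun A => (merge E2 E2').bind (fun B => some (.appGlobal A B))) := rfl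
@[simp] lemma m_letRet (x E1 E2 x' E1' E2') : merge (.letRet x E1 E2) (.letRet x' E1' E2') = if x = x' then (merge E1 E1').bind (fun A => (merge E2 E2').bind (fun B => some (.letRet x A B))) else none := rfl
@[simp] lemma m_send (e ℓ E e' ℓ' E') : merge (.send e ℓ E) (.send e' ℓ' E') = if e = e' ∧ ℓ = ℓ' then (merge E E').map (fun M => .send e ℓ M) else none := rfl
@[simp] lemma m_recv (x ℓ E x' ℓ' E') : merge (.recv x ℓ E) (.recv x' ℓ' E') = if x = x' ∧ ℓ = ℓ' then (merge E E').map (fun M => .recv x ℓ M) else none := rfl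
@[simp] lemma m_ite (e E1 E2 e' E1' E2') : merge (.ite e E1 E2) (.ite e' E1' E2') = if e = e' then (merge E1 E1').bind (fun A => (merge E2 E2').bind (fun B => some (.ite e A B))) else none := rfl
@[simp] lemma m_choose (d ℓ E d' ℓ' E') : merge (.choose d ℓ E) (.choose d' ℓ' E') = if d = d' ∧ ℓ = ℓ' then (merge E E').map (fun M => .choose d ℓ M) else none := rfl
@[simp] lemma m_ll (ℓ E ℓ' E') : merge (.allowL ℓ E) (.allowL ℓ' E') = if ℓ = ℓ' then (merge E E').map (fun M => .allowL ℓ M) else none := rfl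
@[simp] lemma m_lr (ℓ E ℓ' E') : merge (.allowL ℓ E) (.allowR ℓ' E') = if ℓ = ℓ' then some (.allowLR ℓ E E') else none := rfl
@[simp] lemma m_llr (ℓ E ℓ' E1' E2') : merge (.allowL ℓ E) (.allowLR ℓ' E1' E2') = if ℓ = ℓ' then (merge E E1').map (fun M => .allowLR ℓ M E2') else none := rfl
@[simp] lemma m_rl (ℓ E ℓ' E') : merge (.allowR ℓ E) (.allowL ℓ' E') = if ℓ = ℓ' then some (.allowLR ℓ E' E) else none := rfl
@[simp] lemma m_rr (ℓ E ℓ' E') : merge (.allowR ℓ E) (.allowR ℓ' E') = if ℓ = ℓ' then (merge E E').map (fun M => .allowR ℓ M) else none := rfl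
@[simp] lemma m_rlr (ℓ E ℓ' E1' E2') : merge (.allowR ℓ E) (.allowLR ℓ' E1' E2') = if ℓ = ℓ' then (merge E E2').map (fun M => .allowLR ℓ E1' M) else none := rfl
@[simp] lemma m_lrl (ℓ E1 E2 ℓ' E') : merge (.allowLR ℓ E1 E2) (.allowL ℓ' E') = if ℓ = ℓ' then (merge E1 E').map (fun M => .allowLR ℓ M E2) else none := rfl
@[simp] lemma m_lrr (ℓ E1 E2 ℓ' E') : merge (.allowLR ℓ E1 E2) (.allowR ℓ' E') = if ℓ = ℓ' then (merge E2 E').map (fun M => .allowLR ℓ E1 M) else none := rfl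
@[simp] lemma m_lrlr (ℓ E1 E2 ℓ' E1' E2') : merge (.allowLR ℓ E1 E2) (.allowLR ℓ' E1' E2') = if ℓ = ℓ' then (merge E1 E1').bind (fun A => (merge E2 E2').bind (fun B => some (.allowLR ℓ A B))) else none := rfl
/-- Abbreviation for the associativity statement. -/
def MA (A B C : Ctrl) : Prop :=
  (merge A B).bind (fun E => merge E C) = (merge B C).bind (fun E => merge A E)


inductive Key : Type
  | var (X : ℕ) | funLocal (F x : ℕ) (E : Ctrl) | funGlobal (F X : ℕ) (E : Ctrl)
  | appLocal (e : Expr) | appGlobal | unit | ret (e : Expr) | letRet (x : ℕ)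
  | send (e : Expr) (ℓ : ℕ) | recv (x ℓ : ℕ) | ite (e : Expr)
  | choose (d : Choice) (ℓ : ℕ) | allow (ℓ : ℕ)
deriving DecidableEq

def key : Ctrl → Key
  | .var X => .var X
  | .funLocal F x E => .funLocal F x E
  | .funGlobal F X E => .funGlobal F X E
  | .appLocal _ e => .appLocal e
  | .appGlobal _ _ => .appGlobal
  | .unit => .unit
  | .ret e => .ret e
  | .letRet x _ _ => .letRet x
  | .send e ℓ _ => .send e ℓ
  | .recv x ℓ _ => .recv x ℓ
  | .ite e _ _ => .ite e
  | .choose d ℓ _ => .choose d ℓ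
  | .allowL ℓ _ => .allow ℓ
  | .allowR ℓ _ => .allow ℓ
  | .allowLR ℓ _ _ => .allow ℓ

lemma key_of_merge {A B C : Ctrl} (h : merge A B = some C) :
    key A = key B ∧ key C = key A := by
  cases A <;> cases B <;>
    first
      | (cases h; done)
      | (simp only [m_var, m_unit, m_ret, m_funLocal, m_funGlobal, m_appLocal, m_appGlobal,
          m_letRet, m_send, m_recv, m_ite, m_choose, m_ll, m_lr, m_llr, m_rl, m_rr, m_rlr,
          m_lrl, m_lrr, m_lrlr] at h;
         (try split_ifs at h) <;>
           simp_all [key, Option.bind_eq_some_iff, Option.map_eq_some_iff] <;>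
           aesop)

lemma merge_ne {A B : Ctrl} (h : key A ≠ key B) : merge A B = none := by
  cases hm : merge A B with
  | none => rfl
  | some C => exact absurd (key_of_merge hm).1 h

lemma assoc_ne12 {E1 E2 E3 : Ctrl} (h : key E1 ≠ key E2) :
    (merge E1 E2).bind (fun E => merge E E3) = (merge E2 E3).bind (fun E => merge E1 E) := by
  rw [merge_ne h]
  cases hm : merge E2 E3 with
  | none => rfl
  | some M =>
    simp only [Option.bind_none, Option.bind_some]
    exact (merge_ne (fun hk => h (hk.trans (key_of_merge hm).2))).symm

lemma assoc_ne23 {E1 E2 E3 : Ctrl} (h : key E2 ≠ key E3) :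
    (merge E1 E2).bind (fun E => merge E E3) = (merge E2 E3).bind (fun E => merge E1 E) := by
  rw [merge_ne h]
  cases hm : merge E1 E2 with
  | none => rfl
  | some M =>
    simp only [Option.bind_none, Option.bind_some]
    exact merge_ne (fun hk =>
      h ((key_of_merge hm).1.symm.trans ((key_of_merge hm).2.symm.trans hk)))

lemma dispatch {E1 E2 E3 : Ctrl}
    (H : key E1 = key E2 → key E2 = key E3 → MA E1 E2 E3) : MA E1 E2 E3 := by
  unfold MA
  by_cases k12 : key E1 = key E2
  · by_cases k23 : key E2 = key E3
    · exact H k12 k23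
    · exact assoc_ne23 k23
  · exact assoc_ne12 k12

lemma lift1 (f : Ctrl → Ctrl)
    (hf : ∀ M N, merge (f M) (f N) = (merge M N).map f)
    {a a' a'' : Ctrl} (ih : MA a a' a'') : MA (f a) (f a') (f a'') := by
  unfold MA at ih ⊢
  rw [hf, hf]
  calc ((merge a a').map f).bind (fun E => merge E (f a''))
      = ((merge a a').bind (fun E => merge E a'')).map f := by
        cases merge a a' <;> simp [hf]
    _ = ((merge a' a'').bind (fun E => merge a E)).map f := by rw [ih]
    _ = ((merge a' a'').map f).bind (fun E => merge (f a) E) := by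
        cases merge a' a'' <;> simp [hf]

lemma core2 {α β γ δ ε : Type} (x : Option α) (y : Option β) (g : α → Option γ)
    (h : β → Option δ) (k : γ → δ → Option ε) :
    (x.bind fun A => y.bind fun B => (g A).bind fun A' => (h B).bind fun B' => k A' B')
      = (x.bind g).bind fun A' => (y.bind h).bind fun B' => k A' B' := by
  cases x with
  | none => simp
  | some A =>
    cases y with
    | none => cases g A <;> simp
    | some B => simp

lemma lift2 (f : Ctrl → Ctrl → Ctrl)
    (hf : ∀ M N P Q, merge (f M N) (f P Q)
        = (merge M P).bind (fun A => (merge N Q).bind (fun B => some (f A B))))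
    {a b a' b' a'' b'' : Ctrl} (iha : MA a a' a'') (ihb : MA b b' b'') :
    MA (f a b) (f a' b') (f a'' b'')  := by
  unfold MA at iha ihb ⊢
  rw [hf, hf]
  calc ((merge a a').bind fun A => (merge b b').bind fun B => some (f A B)).bind
          (fun E => merge E (f a'' b''))
      = (merge a a').bind fun A => (merge b b').bind fun B =>
          (merge A a'').bind fun A' => (merge B b'').bind fun B' => some (f A' B') := by
        cases merge a a' <;> cases merge b b' <;> simp [hf]
    _ = ((merge a a').bind fun A => merge A a'').bind fun A' =>
          ((merge b b').bind fun B => merge B b'').bind fun B' => some (f A' B') :=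
        core2 _ _ _ _ _
    _ = ((merge a' a'').bind fun A => merge a A).bind fun A' =>
          ((merge b' b'').bind fun B => merge b B).bind fun B' => some (f A' B') := by
        rw [iha, ihb]
    _ = (merge a' a'').bind fun A => (merge b' b'').bind fun B =>
          (merge a A).bind fun A' => (merge b B).bind fun B' => some (f A' B') :=
        (core2 _ _ _ _ _).symm
    _ = ((merge a' a'').bind fun A => (merge b' b'').bind fun B => some (f A B)).bind
          (fun E => merge (f a b) E) := by
        cases merge a' a'' <;> cases merge b' b'' <;> simp [hf]

/-- Package the two "sides" of an allow-expression. -/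
def mk (ℓ : ℕ) : Option Ctrl → Option Ctrl → Option Ctrl
  | some a, none => some (.allowL ℓ a)
  | none, some b => some (.allowR ℓ b)
  | some a, some b => some (.allowLR ℓ a b)
  | none, none => none

/-- Merge of optional sides. -/
def amerge : Option Ctrl → Option Ctrl → Option (Option Ctrl)
  | none, y => some y
  | some x, none => some (some x)
  | some x, some y => (merge x y).map some

@[simp] lemma mk_nn (ℓ) : mk ℓ none none = none := rfl
@[simp] lemma mk_sn (ℓ a) : mk ℓ (some a) none = some (.allowL ℓ a) := rfl
@[simp] lemma mk_ns (ℓ b) : mk ℓ none (some b) = some (.allowR ℓ b) := rfl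
@[simp] lemma mk_ss (ℓ a b) : mk ℓ (some a) (some b) = some (.allowLR ℓ a b) := rfl
@[simp] lemma am_n (y) : amerge none y = some y := rfl
@[simp] lemma am_sn (x) : amerge (some x) none = some (some x) := rfl
@[simp] lemma am_ss (x y) : amerge (some x) (some y) = (merge x y).map some := rfl

@[simp] lemma bind_assoc' {α β γ : Type} (x : Option α) (f : α → Option β) (g : β → Option γ) :
    (x.bind f).bind g = x.bind (fun a => (f a).bind g) := by cases x <;> rfl

@[simp] lemma map_bind' {α β γ : Type} (x : Option α) (f : α → β) (g : β → Option γ) :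
    (x.map f).bind g = x.bind (fun a => g (f a)) := by cases x <;> rfl

lemma allowA {ℓ : ℕ} {x1 y1 x2 y2 : Option Ctrl} {A B : Ctrl}
    (h1 : mk ℓ x1 y1 = some A) (h2 : mk ℓ x2 y2 = some B) :
    merge A B = (amerge x1 x2).bind fun L => (amerge y1 y2).bind fun R => mk ℓ L R := by
  cases x1 <;> cases y1 <;> cases x2 <;> cases y2 <;>
    simp only [mk_nn, mk_sn, mk_ns, mk_ss, reduceCtorEq, Option.some.injEq] at h1 h2 <;>
    subst h1 <;> subst h2 <;>
    simp [Option.map_eq_bind]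

lemma allowB {x y z : Option Ctrl}
    (H : ∀ a b c, x = some a → y = some b → z = some c → MA a b c) :
    (amerge x y).bind (fun L => amerge L z) = (amerge y z).bind (fun L => amerge x L) := by
  cases x with
  | none => cases y <;> cases z <;> simp
  | some a =>
    cases y with
    | none => cases z <;> simp
    | some b =>
      cases z with
      | none => simp [Option.map_eq_bind]
      | some c =>
        have H' := H a b c rfl rfl rfl
        unfold MA at H'
        simp only [am_ss, map_bind']
        calc (merge a b).bind (fun M => amerge (some M) (some c))
            = ((merge a b).bind fun M => merge M c).bind (fun M => some (some M)) := by
              simp [Option.map_eq_bind]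
          _ = ((merge b c).bind fun M => merge a M).bind (fun M => some (some M)) := by
              rw [H']
          _ = (merge b c).bind (fun M => amerge (some a) (some M)) := by
              simp [Option.map_eq_bind]

lemma mk_isSome {ℓ : ℕ} {L R : Option Ctrl} (h : L ≠ none ∨ R ≠ none) :
    ∃ M, mk ℓ L R = some M := by
  cases L <;> cases R <;> simp_all

lemma amerge_mem_ne {x z L : Option Ctrl} (hx : x ≠ none) (hL : amerge x z = some L) :
    L ≠ none := by
  cases x <;> cases z <;> simp_all [Option.map_eq_bind, Option.bind_eq_some_iff]
  · subst hL; simp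
  · obtain ⟨a, -, hr⟩ := hL; subst hr; simp

lemma mk_ne_none {ℓ : ℕ} {x y : Option Ctrl} {E : Ctrl} (h : mk ℓ x y = some E) :
    x ≠ none ∨ y ≠ none := by
  cases x <;> cases y <;> simp_all

lemma bind_congr' {α β : Type} {x : Option α} {f g : α → Option β}
    (h : ∀ a, x = some a → f a = g a) : x.bind f = x.bind g := by
  cases x <;> simp_all

lemma allowC {ℓ : ℕ} {x1 y1 x2 y2 x3 y3 : Option Ctrl} {E1 E2 E3 : Ctrl}
    (h1 : mk ℓ x1 y1 = some E1) (h2 : mk ℓ x2 y2 = some E2) (h3 : mk ℓ x3 y3 = some E3)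
    (Hx : ∀ a b c, x1 = some a → x2 = some b → x3 = some c → MA a b c)
    (Hy : ∀ a b c, y1 = some a → y2 = some b → y3 = some c → MA a b c) :
    MA E1 E2 E3 := by
  have hx := allowB Hx
  have hy := allowB Hy
  unfold MA
  calc (merge E1 E2).bind (fun E => merge E E3)
      = ((amerge x1 x2).bind fun L => (amerge y1 y2).bind fun R => mk ℓ L R).bind
          (fun M => merge M E3) := by rw [allowA h1 h2]
    _ = (amerge x1 x2).bind fun L => (amerge y1 y2).bind fun R =>
          (mk ℓ L R).bind (fun M => merge M E3) := by simp
    _ = (amerge x1 x2).bind fun L => (amerge y1 y2).bind fun R =>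
          (amerge L x3).bind fun L' => (amerge R y3).bind fun R' => mk ℓ L' R' := by
        refine bind_congr' (fun L hL => bind_congr' (fun R hR => ?_))
        have hne : L ≠ none ∨ R ≠ none := by
          rcases mk_ne_none h1 with h | h
          · exact Or.inl (amerge_mem_ne h hL)
          · exact Or.inr (amerge_mem_ne h hR)
        obtain ⟨M, hM⟩ := mk_isSome (ℓ := ℓ) hne
        rw [hM, Option.bind_some, allowA hM h3]
    _ = ((amerge x1 x2).bind fun L => amerge L x3).bind fun L' =>
          ((amerge y1 y2).bind fun R => amerge R y3).bind fun R' => mk ℓ L' R' :=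
        core2 _ _ _ _ _
    _ = ((amerge x2 x3).bind fun L => amerge x1 L).bind fun L' =>
          ((amerge y2 y3).bind fun R => amerge y1 R).bind fun R' => mk ℓ L' R' := by
        rw [hx, hy]
    _ = (amerge x2 x3).bind fun L => (amerge y2 y3).bind fun R =>
          (amerge x1 L).bind fun L' => (amerge y1 R).bind fun R' => mk ℓ L' R' :=
        (core2 _ _ _ _ _).symm
    _ = (amerge x2 x3).bind fun L => (amerge y2 y3).bind fun R =>
          (mk ℓ L R).bind (fun M => merge E1 M) := by
        refine bind_congr' (fun L hL => bind_congr' (fun R hR => ?_))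
        have hne : L ≠ none ∨ R ≠ none := by
          rcases mk_ne_none h2 with h | h
          · exact Or.inl (amerge_mem_ne h hL)
          · exact Or.inr (amerge_mem_ne h hR)
        obtain ⟨M, hM⟩ := mk_isSome (ℓ := ℓ) hne
        rw [hM, Option.bind_some, allowA h1 hM]
    _ = ((amerge x2 x3).bind fun L => (amerge y2 y3).bind fun R => mk ℓ L R).bind
          (fun M => merge E1 M) := by simp
    _ = (merge E2 E3).bind (fun E => merge E1 E) := by rw [← allowA h2 h3]

/-! Inversion from keys. -/

lemma key_var {E : Ctrl} {X} (h : key E = .var X) : E = .var X := by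
  cases E <;> simp_all [key]
lemma key_funLocal {E : Ctrl} {F x B} (h : key E = .funLocal F x B) : E = .funLocal F x B := by
  cases E <;> simp_all [key]
lemma key_funGlobal {E : Ctrl} {F X B} (h : key E = .funGlobal F X B) : E = .funGlobal F X B := by
  cases E <;> simp_all [key]
lemma key_unit {E : Ctrl} (h : key E = .unit) : E = .unit := by
  cases E <;> simp_all [key]
lemma key_ret {E : Ctrl} {e} (h : key E = .ret e) : E = .ret e := by
  cases E <;> simp_all [key]
lemma key_appLocal {E : Ctrl} {e} (h : key E = .appLocal e) : ∃ A, E = .appLocal A e := by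
  cases E <;> simp_all [key]
lemma key_appGlobal {E : Ctrl} (h : key E = .appGlobal) : ∃ A B, E = .appGlobal A B := by
  cases E <;> simp_all [key]
lemma key_letRet {E : Ctrl} {x} (h : key E = .letRet x) : ∃ A B, E = .letRet x A B := by
  cases E <;> simp_all [key]
lemma key_send {E : Ctrl} {e ℓ} (h : key E = .send e ℓ) : ∃ A, E = .send e ℓ A := by
  cases E <;> simp_all [key]
lemma key_recv {E : Ctrl} {x ℓ} (h : key E = .recv x ℓ) : ∃ A, E = .recv x ℓ A := by
  cases E <;> simp_all [key]
lemma key_ite {E : Ctrl} {e} (h : key E = .ite e) : ∃ A B, E = .ite e A B := by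
  cases E <;> simp_all [key]
lemma key_choose {E : Ctrl} {d ℓ} (h : key E = .choose d ℓ) : ∃ A, E = .choose d ℓ A := by
  cases E <;> simp_all [key]

/-- Left side of an allow expression. -/
def sL : Ctrl → Option Ctrl
  | .allowL _ a => some a
  | .allowLR _ a _ => some a
  | _ => none

/-- Right side of an allow expression. -/
def sR : Ctrl → Option Ctrl
  | .allowR _ b => some b
  | .allowLR _ _ b => some b
  | _ => none

lemma mk_sides {ℓ : ℕ} {E : Ctrl} (h : key E = .allow ℓ) : mk ℓ (sL E) (sR E) = some E := by
  cases E <;> simp_all [key, sL, sR]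

/-- The main associativity statement. -/
theorem MA_all : ∀ E1 E2 E3 : Ctrl, MA E1 E2 E3 := by
  intro E1
  induction E1 with
  | var X =>
    intro E2 E3
    refine dispatch (fun k12 k23 => ?_)
    obtain rfl := key_var k12.symm
    obtain rfl := key_var k23.symm
    simp [MA]
  | funLocal F x B =>
    intro E2 E3
    refine dispatch (fun k12 k23 => ?_)
    obtain rfl := key_funLocal k12.symm
    obtain rfl := key_funLocal k23.symm
    simp [MA]
  | funGlobal F X B =>
    intro E2 E3
    refine dispatch (fun k12 k23 => ?_)
    obtain rfl := key_funGlobal k12.symm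
    obtain rfl := key_funGlobal k23.symm
    simp [MA]
  | unit =>
    intro E2 E3
    refine dispatch (fun k12 k23 => ?_)
    obtain rfl := key_unit k12.symm
    obtain rfl := key_unit k23.symm
    simp [MA]
  | ret e =>
    intro E2 E3
    refine dispatch (fun k12 k23 => ?_)
    obtain rfl := key_ret k12.symm
    obtain rfl := key_ret k23.symm
    simp [MA]
  | appLocal A e ihA =>
    intro E2 E3
    refine dispatch (fun k12 k23 => ?_)
    obtain ⟨A2, rfl⟩ := key_appLocal k12.symm
    obtain ⟨A3, rfl⟩ := key_appLocal k23.symm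
    exact lift1 (fun M => .appLocal M e) (fun M N => by simp) (ihA A2 A3)
  | appGlobal A B ihA ihB =>
    intro E2 E3
    refine dispatch (fun k12 k23 => ?_)
    obtain ⟨A2, B2, rfl⟩ := key_appGlobal k12.symm
    obtain ⟨A3, B3, rfl⟩ := key_appGlobal k23.symm
    exact lift2 Ctrl.appGlobal (fun M N P Q => m_appGlobal M N P Q) (ihA A2 A3) (ihB B2 B3)
  | letRet x A B ihA ihB =>
    intro E2 E3
    refine dispatch (fun k12 k23 => ?_)
    obtain ⟨A2, B2, rfl⟩ := key_letRet k12.symm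
    obtain ⟨A3, B3, rfl⟩ := key_letRet k23.symm
    exact lift2 (Ctrl.letRet x) (fun M N P Q => by simp) (ihA A2 A3) (ihB B2 B3)
  | send e ℓ A ihA =>
    intro E2 E3
    refine dispatch (fun k12 k23 => ?_)
    obtain ⟨A2, rfl⟩ := key_send k12.symm
    obtain ⟨A3, rfl⟩ := key_send k23.symm
    exact lift1 (fun M => .send e ℓ M) (fun M N => by simp) (ihA A2 A3)
  | recv x ℓ A ihA =>
    intro E2 E3
    refine dispatch (fun k12 k23 => ?_)
    obtain ⟨A2, rfl⟩ := key_recv k12.symm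
    obtain ⟨A3, rfl⟩ := key_recv k23.symm
    exact lift1 (fun M => .recv x ℓ M) (fun M N => by simp) (ihA A2 A3)
  | ite e A B ihA ihB =>
    intro E2 E3
    refine dispatch (fun k12 k23 => ?_)
    obtain ⟨A2, B2, rfl⟩ := key_ite k12.symm
    obtain ⟨A3, B3, rfl⟩ := key_ite k23.symm
    exact lift2 (Ctrl.ite e) (fun M N P Q => by simp) (ihA A2 A3) (ihB B2 B3)
  | choose d ℓ A ihA =>
    intro E2 E3
    refine dispatch (fun k12 k23 => ?_)
    obtain ⟨A2, rfl⟩ := key_choose k12.symm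
    obtain ⟨A3, rfl⟩ := key_choose k23.symm
    exact lift1 (fun M => .choose d ℓ M) (fun M N => by simp) (ihA A2 A3)
  | allowL ℓ A ihA =>
    intro E2 E3
    refine dispatch (fun k12 k23 => ?_)
    refine allowC (mk_sides rfl) (mk_sides k12.symm) (mk_sides (k23.symm.trans k12.symm))
      (fun p q r hp hq hr => ?_) (fun p q r hp hq hr => ?_)
    · simp only [sL, Option.some.injEq] at hp
      exact hp ▸ ihA q r
    · simp only [sR, reduceCtorEq] at hp
  | allowR ℓ A ihA =>
    intro E2 E3
    refine dispatch (fun k12 k23 => ?_)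
    refine allowC (mk_sides rfl) (mk_sides k12.symm) (mk_sides (k23.symm.trans k12.symm))
      (fun p q r hp hq hr => ?_) (fun p q r hp hq hr => ?_)
    · simp only [sL, reduceCtorEq] at hp
    · simp only [sR, Option.some.injEq] at hp
      exact hp ▸ ihA q r
  | allowLR ℓ A B ihA ihB =>
    intro E2 E3
    refine dispatch (fun k12 k23 => ?_)
    refine allowC (mk_sides rfl) (mk_sides k12.symm) (mk_sides (k23.symm.trans k12.symm))
      (fun p q r hp hq hr => ?_) (fun p q r hp hq hr => ?_)
    · simp only [sL, Option.some.injEq] at hp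
      exact hp ▸ ihA q r
    · simp only [sR, Option.some.injEq] at hp
      exact hp ▸ ihB q r

end MergeAssoc

/-- Merge is associative (equality of partial results, including undefinedness). -/
theorem merge_assoc (E1 E2 E3 : Ctrl) :
    (merge E1 E2).bind (fun E => merge E E3)
      = (merge E2 E3).bind (fun E => merge E1 E) := by
  exact MergeAssoc.MA_all E1 E2 E3
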